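/- If G is a connected trivially perfect graph, then the maximum number of pairwise independent edges of G (i.e., the independence number of K_e(G)) equals the edge-clique covering number θ_e(G). -/

import Mathlib

open SimpleGraph

/-- `A` is an independent set of edges of `G`: no two members lie in a common
clique of `G`. -/
def EdgeIndep {V : Type*} (G : SimpleGraph V) (A : Set (Sym2 V)) : Prop :=
  A ⊆ G.edgeSet ∧
    A.Pairwise fun e f => ¬ G.IsClique {x | x ∈ e ∨ x ∈ f}

/-- `α'(G) = α(K_e(G))`, the maximum size of an independent set of edges. -/
noncomputable def alphaPrime {V : Type*} (G : SimpleGraph V) : ℕ :=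
  sSup {k | ∃ A : Finset (Sym2 V), EdgeIndep G ↑A ∧ A.card = k}

/-- A family of cliques covering every edge of `G`. -/
def IsEdgeCliqueCover {V : Type*} (G : SimpleGraph V) (F : Finset (Finset V)) : Prop :=
  (∀ C ∈ F, G.IsClique (C : Set V)) ∧
    ∀ e ∈ G.edgeSet, ∃ C ∈ F, ∀ x ∈ e, x ∈ C

/-- The edge-clique covering number `θ_e(G)`. -/
noncomputable def thetaE {V : Type*} (G : SimpleGraph V) : ℕ :=
  sInf {n | ∃ F : Finset (Finset V), IsEdgeCliqueCover G F ∧ F.card = n}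


section Aux

variable {V : Type*}

lemma c4_embed (G : SimpleGraph V) {a b c d : V}
    (hab : G.Adj a b) (hbc : G.Adj b c) (hcd : G.Adj c d) (hda : G.Adj d a)
    (hac : ¬ G.Adj a c) (hbd : ¬ G.Adj b d) (hac' : a ≠ c) (hbd' : b ≠ d) :
    Nonempty (cycleGraph 4 ↪g G) := by
  have hinj : Function.Injective (![a,b,c,d] : Fin 4 → V) := by
    intro i j hij
    fin_cases i <;> fin_cases j <;> simp_all
  refine ⟨⟨⟨![a,b,c,d], hinj⟩, ?_⟩⟩
  intro i j
  fin_cases i <;> fin_cases j <;>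
    simp [cycleGraph_adj] <;> first
      | exact G.loopless _
      | exact hab | exact hab.symm | exact hbc | exact hbc.symm
      | exact hcd | exact hcd.symm | exact hda | exact hda.symm
      | exact hac | exact fun h => hac h.symm
      | exact hbd | exact fun h => hbd h.symm
      | exact iff_of_false hac (by decide)
      | exact iff_of_false (fun h => hac h.symm) (by decide)
      | exact iff_of_true hda.symm (by decide)
      | exact iff_of_true hda (by decide)

lemma p4_embed (G : SimpleGraph V) {a b c d : V}
    (hab : G.Adj a b) (hbc : G.Adj b c) (hcd : G.Adj c d)
    (hac : ¬ G.Adj a c) (had : ¬ G.Adj a d) (hbd : ¬ G.Adj b d)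
    (hac' : a ≠ c) (had' : a ≠ d) (hbd' : b ≠ d) :
    Nonempty (pathGraph 4 ↪g G) := by
  have hinj : Function.Injective (![a,b,c,d] : Fin 4 → V) := by
    intro i j hij
    fin_cases i <;> fin_cases j <;> simp_all
  refine ⟨⟨⟨![a,b,c,d], hinj⟩, ?_⟩⟩
  intro i j
  fin_cases i <;> fin_cases j <;>
    simp [pathGraph_adj] <;> first
      | exact G.loopless _
      | exact hab | exact hab.symm | exact hbc | exact hbc.symm
      | exact hcd | exact hcd.symm
      | exact hac | exact fun h => hac h.symm
      | exact had | exact fun h => had h.symm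
      | exact hbd | exact fun h => hbd h.symm
      | exact iff_of_true hcd (by decide)
      | exact iff_of_true hcd.symm (by decide)
      | exact iff_of_false had (by decide)
      | exact iff_of_false (fun h => had h.symm) (by decide)
      | exact iff_of_false hbd (by decide)
      | exact iff_of_false (fun h => hbd h.symm) (by decide)
/-- `G` with all edges at `u` removed. -/
def Gdel (G : SimpleGraph V) (u : V) : SimpleGraph V where
  Adj x y := G.Adj x y ∧ x ≠ u ∧ y ≠ u
  symm := by constructor; rintro x y ⟨h, hx, hy⟩; exact ⟨h.symm, hy, hx⟩
  loopless := by constructor; rintro x ⟨h, _, _⟩; exact G.loopless.irrefl x h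

lemma Gdel_le (G : SimpleGraph V) (u : V) : Gdel G u ≤ G := fun _ _ h => h.1

lemma Gdel_adj {G : SimpleGraph V} {u x y : V} :
    (Gdel G u).Adj x y ↔ G.Adj x y ∧ x ≠ u ∧ y ≠ u := Iff.rfl

lemma embed_transfer {n : ℕ} {H : SimpleGraph (Fin n)} {G : SimpleGraph V} {u : V}
    (hdeg : ∀ i : Fin n, ∃ j, H.Adj i j) (f : H ↪g Gdel G u) :
    Nonempty (H ↪g G) := by
  have hne : ∀ i : Fin n, f i ≠ u := by
    intro i
    obtain ⟨j, hj⟩ := hdeg i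
    exact ((f.map_rel_iff).mpr hj).2.1
  refine ⟨⟨f.toEmbedding, ?_⟩⟩
  intro i j
  constructor
  · intro h
    exact f.map_rel_iff.mp ⟨h, hne i, hne j⟩
  · intro h
    exact (f.map_rel_iff.mpr h).1

lemma cycle4_deg : ∀ i : Fin 4, ∃ j, (cycleGraph 4).Adj i j := by
  intro i
  refine ⟨i + 1, ?_⟩
  have : (cycleGraph (2 + 2)).Adj i (i + 1) := by
    rw [cycleGraph_adj]
    right
    simp
  exact this

lemma path4_deg : ∀ i : Fin 4, ∃ j, (pathGraph 4).Adj i j := by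
  intro i
  fin_cases i
  · exact ⟨1, by rw [pathGraph_adj]; left; rfl⟩
  · exact ⟨2, by rw [pathGraph_adj]; left; rfl⟩
  · exact ⟨3, by rw [pathGraph_adj]; left; rfl⟩
  · exact ⟨2, by rw [pathGraph_adj]; right; rfl⟩
lemma walk_find {G : SimpleGraph V} {u : V} :
    ∀ {v x : V} (q : G.Walk v x), G.Adj u v → u ∉ q.support → ¬ G.Adj u x →
      ∃ a b, G.Adj u a ∧ G.Adj a b ∧ ¬ G.Adj u b ∧ b ≠ u := by
  intro v x q
  induction q with
  | nil => exact fun h _ h2 => absurd h h2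
  | @cons v w x h r ih =>
    intro huv hsup hux
    by_cases haw : G.Adj u w
    · refine ih haw ?_ hux
      intro hmem
      exact hsup (by rw [Walk.support_cons]; exact List.mem_cons_of_mem _ hmem)
    · refine ⟨v, w, huv, h, haw, ?_⟩
      intro hwu
      apply hsup
      rw [Walk.support_cons]
      exact List.mem_cons_of_mem _ (hwu ▸ r.start_mem_support)

lemma exists_dist2 {G : SimpleGraph V} {u x : V} (hreach : G.Reachable u x)
    (hne : x ≠ u) (hnadj : ¬ G.Adj u x) :
    ∃ a b, G.Adj u a ∧ G.Adj a b ∧ ¬ G.Adj u b ∧ b ≠ u := by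
  classical
  obtain ⟨p⟩ := hreach
  have hp := p.toPath.2
  set q := p.toPath.1 with hq
  clear_value q
  cases q with
  | nil => exact absurd rfl hne
  | cons h r =>
    rw [Walk.cons_isPath_iff] at hp
    exact walk_find r h hp.2 hnadj

/-- a maximum-degree vertex is adjacent to everything in its component. -/
lemma maxdeg_universal [Fintype V] {G : SimpleGraph V} [DecidableRel G.Adj] {u : V}
    (hmax : ∀ w : V, G.degree w ≤ G.degree u)
    (hC4 : ¬ Nonempty (cycleGraph 4 ↪g G))
    (hP4 : ¬ Nonempty (pathGraph 4 ↪g G)) :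
    ∀ x, G.Reachable u x → x ≠ u → G.Adj u x := by
  intro x hreach hne
  by_contra hnadj
  obtain ⟨a, b, hua, hab, hub, hbu⟩ := exists_dist2 hreach hne hnadj
  -- degree counting: find c ∈ N(u) \ N(a), c ≠ a
  classical
  set Nu := G.neighborFinset u with hNu
  set Na := G.neighborFinset a with hNa
  have hsub : {b, u} ⊆ Na \ Nu := by
    intro z hz
    simp only [hNa, hNu, Finset.mem_sdiff, mem_neighborFinset]
    rcases Finset.mem_insert.mp hz with rfl | hz
    · exact ⟨hab, hub⟩
    · have hz' : z = u := Finset.mem_singleton.mp hz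
      rw [hz']
      exact ⟨hua.symm, G.loopless.irrefl u⟩
  have h2 : 2 ≤ (Na \ Nu).card := by
    have := Finset.card_le_card hsub
    rwa [Finset.card_insert_of_notMem (by simp [hbu]), Finset.card_singleton] at this
  have hcard : (Na \ Nu).card ≤ (Nu \ Na).card := by
    have h1 : (Na \ Nu).card + (Na ∩ Nu).card = Na.card := Finset.card_sdiff_add_card_inter Na Nu
    have h2' : (Nu \ Na).card + (Nu ∩ Na).card = Nu.card := Finset.card_sdiff_add_card_inter Nu Na
    have h3 : Na.card ≤ Nu.card := by
      simpa [hNa, hNu, card_neighborFinset_eq_degree] using hmax a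
    rw [Finset.inter_comm] at h2'
    omega
  have h4 : (Nu \ Na).card - 1 ≤ ((Nu \ Na).erase a).card :=
    Finset.pred_card_le_card_erase
  obtain ⟨c, hc⟩ := Finset.card_pos.mp (show 0 < ((Nu \ Na).erase a).card by omega)
  have hc' := Finset.mem_erase.mp hc
  have hca : c ≠ a := hc'.1
  have hcmem := Finset.mem_sdiff.mp hc'.2
  have huc : G.Adj u c := (mem_neighborFinset ..).mp hcmem.1
  have hac : ¬ G.Adj a c := fun h => hcmem.2 ((mem_neighborFinset ..).mpr h)
  have hcb : c ≠ b := fun h => hub (h ▸ huc)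
  -- vertices: c - u - a - b
  by_cases hcb' : G.Adj c b
  · -- C4: c u a b
    exact hC4 (c4_embed G huc.symm hua hab hcb'.symm (fun h => hac h.symm) hub hca
      (fun h => hbu h.symm))
  · -- P4: c u a b
    exact hP4 (p4_embed G huc.symm hua hab (fun h => hac h.symm) hcb' hub hca hcb
      (fun h => hbu h.symm))
lemma indep_card_le_cover_card (G : SimpleGraph V) (A : Finset (Sym2 V))
    (hA : EdgeIndep G ↑A) (F : Finset (Finset V)) (hF : IsEdgeCliqueCover G F) :
    A.card ≤ F.card := by
  classical
  have hch : ∀ e ∈ A, ∃ C ∈ F, ∀ x ∈ e, x ∈ C := fun e he =>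
    hF.2 e (hA.1 he)
  choose f hfF hfmem using hch
  have : ∀ e (he : e ∈ A), f e he ∈ F := hfF
  -- use attach
  have hinj : ∀ e₁ (h₁ : e₁ ∈ A), ∀ e₂ (h₂ : e₂ ∈ A), f e₁ h₁ = f e₂ h₂ → e₁ = e₂ := by
    intro e₁ h₁ e₂ h₂ heq
    by_contra hne
    have hcl := hF.1 _ (hfF e₁ h₁)
    have : G.IsClique {x | x ∈ e₁ ∨ x ∈ e₂} := by
      apply hcl.subset
      intro x hx
      rcases hx with hx | hx
      · exact hfmem e₁ h₁ x hx
      · rw [heq]; exact hfmem e₂ h₂ x hx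
    exact hA.2 (by simpa using h₁) (by simpa using h₂) hne this
  calc A.card = A.attach.card := Finset.card_attach.symm
    _ ≤ F.card := by
        apply Finset.card_le_card_of_injOn (fun e => f e.1 e.2)
        · intro e _; exact hfF e.1 e.2
        · intro e₁ _ e₂ _ h
          exact Subtype.ext (hinj e₁.1 e₁.2 e₂.1 e₂.2 h)

lemma cover_nonempty (G : SimpleGraph V) [Fintype V] :
    ∃ F : Finset (Finset V), IsEdgeCliqueCover G F := by
  classical
  refine ⟨(Finset.univ : Finset V).powerset.filter (fun C => G.IsClique (C : Set V)), ?_, ?_⟩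
  · intro C hC; exact (Finset.mem_filter.mp hC).2
  · intro e he
    induction e with
    | h a b =>
      refine ⟨{a, b}, ?_, ?_⟩
      · simp only [Finset.mem_filter, Finset.mem_powerset]
        constructor
        · intro x _; exact Finset.mem_univ x
        · rw [Finset.coe_insert, Finset.coe_singleton]
          rw [isClique_pair]
          intro _; exact he
      · intro x hx
        rcases Sym2.mem_iff.mp hx with h | h <;> simp [h]

lemma alpha_bddAbove (G : SimpleGraph V) [Fintype V] :
    BddAbove {k | ∃ A : Finset (Sym2 V), EdgeIndep G ↑A ∧ A.card = k} := by
  classical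
  refine ⟨Fintype.card (Sym2 V), ?_⟩
  rintro k ⟨A, _, rfl⟩
  exact Finset.card_le_univ A

lemma alphaPrime_le_thetaE (G : SimpleGraph V) [Fintype V] :
    alphaPrime G ≤ thetaE G := by
  classical
  obtain ⟨F, hF⟩ := cover_nonempty G
  apply csSup_le
  · exact ⟨0, ∅, ⟨by simp [EdgeIndep], by simp⟩, by simp⟩
  · rintro k ⟨A, hA, rfl⟩
    refine le_csInf ⟨F.card, F, hF, rfl⟩ ?_
    rintro n ⟨F', hF', rfl⟩
    exact indep_card_le_cover_card G A hA F' hF'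
open Classical in
/-- pendant neighbors of `u`. -/
noncomputable def pend [Fintype V] (G : SimpleGraph V) (u : V) : Finset V :=
  Finset.univ.filter (fun x => G.Adj u x ∧ ∀ y, G.Adj x y → y = u)

lemma mem_pend [Fintype V] {G : SimpleGraph V} {u x : V} :
    x ∈ pend G u ↔ G.Adj u x ∧ ∀ y, G.Adj x y → y = u := by
  classical
  simp [pend]
lemma gdel_edge_ne {G : SimpleGraph V} {u : V} {e : Sym2 V}
    (he : e ∈ (Gdel G u).edgeSet) : ∀ x ∈ e, x ≠ u := by
  induction e with
  | h a b =>
    rw [mem_edgeSet] at he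
    intro x hx
    rcases Sym2.mem_iff.mp hx with rfl | rfl
    · exact he.2.1
    · exact he.2.2

lemma alpha_step [Fintype V] (G : SimpleGraph V) (u : V) :
    alphaPrime (Gdel G u) + (pend G u).card ≤ alphaPrime G := by
  classical
  have hmem : alphaPrime (Gdel G u) ∈
      {k | ∃ A : Finset (Sym2 V), EdgeIndep (Gdel G u) ↑A ∧ A.card = k} :=
    Nat.sSup_mem ⟨0, ∅, ⟨by simp [EdgeIndep], by simp⟩, by simp⟩ (alpha_bddAbove _)
  obtain ⟨A', hA', hcard⟩ := hmem
  set A : Finset (Sym2 V) := A' ∪ (pend G u).image (fun x => s(u, x)) with hA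
  -- key facts about pendant edges
  have hpe : ∀ x ∈ pend G u, x ≠ u := fun x hx => ((mem_pend.mp hx).1).ne'
  have hinjP : Set.InjOn (fun x => s(u, x)) ↑(pend G u) := by
    intro x hx y hy hxy
    simp only [Sym2.eq, Sym2.rel_iff', Prod.mk.injEq, Prod.swap_prod_mk] at hxy
    rcases hxy with ⟨-, h⟩ | ⟨h1, h2⟩
    · exact h
    · exact absurd h2 (hpe x hx)
  have hdisj : Disjoint A' ((pend G u).image (fun x => s(u, x))) := by
    rw [Finset.disjoint_right]
    intro e he hmemA
    obtain ⟨x, hx, rfl⟩ := Finset.mem_image.mp he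
    exact gdel_edge_ne (hA'.1 hmemA) u (Sym2.mem_mk_left u x) rfl
  -- members of A' avoid u
  have hAu : ∀ e ∈ A', ∀ x ∈ e, x ≠ u := fun e he => gdel_edge_ne (hA'.1 he)
  -- pendant vertices not in A' edges
  have hpend_not : ∀ x ∈ pend G u, ∀ e ∈ A', x ∉ e := by
    intro x hx e he hmem
    obtain ⟨y, rfl⟩ := Sym2.mem_iff_exists.mp hmem
    have := (hA'.1 he)
    rw [mem_edgeSet] at this
    exact this.2.2 ((mem_pend.mp hx).2 y this.1)
  have hindep : EdgeIndep G ↑A := by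
    constructor
    · intro e he
      rcases Finset.mem_union.mp he with h | h
      · exact edgeSet_mono (Gdel_le G u) (hA'.1 h)
      · obtain ⟨x, hx, rfl⟩ := Finset.mem_image.mp h
        exact (mem_edgeSet _).mpr (mem_pend.mp hx).1
    · intro e he f hf hne hcl
      replace he := Finset.mem_union.mp (Finset.mem_coe.mp he)
      replace hf := Finset.mem_union.mp (Finset.mem_coe.mp hf)
      -- helper: contradiction when e ∈ A' and f pendant
      have mixed : ∀ e ∈ A', ∀ x ∈ pend G u,
          ¬ G.IsClique {z | z ∈ e ∨ z ∈ s(u, x)} := by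
        intro e heA x hx hclq
        obtain ⟨p, hp⟩ : ∃ p, p ∈ e := ⟨e.out.1, Sym2.out_fst_mem e⟩
        have hpu : p ≠ u := hAu e heA p hp
        have hpx : p ≠ x := fun h => hpend_not x hx e heA (h ▸ hp)
        have hadj := hclq (Or.inl hp) (Or.inr (Sym2.mem_mk_right u x)) hpx
        exact hpu ((mem_pend.mp hx).2 p hadj.symm)
      rcases he with he | he <;> rcases hf with hf | hf
      · -- both in A'
        refine (hA'.2 (Finset.mem_coe.mpr he) (Finset.mem_coe.mpr hf) hne) ?_
        intro z hz w hw hzw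
        have hzu : z ≠ u := by rcases hz with h | h; exacts [hAu e he z h, hAu f hf z h]
        have hwu : w ≠ u := by rcases hw with h | h; exacts [hAu e he w h, hAu f hf w h]
        exact ⟨hcl hz hw hzw, hzu, hwu⟩
      · obtain ⟨x, hx, rfl⟩ := Finset.mem_image.mp hf
        exact mixed e he x hx hcl
      · obtain ⟨x, hx, rfl⟩ := Finset.mem_image.mp he
        refine mixed f hf x hx ?_
        have : {z | z ∈ f ∨ z ∈ s(u, x)} = {z | z ∈ s(u, x) ∨ z ∈ f} := by
          ext z; exact or_comm
        rw [this]
        exact hcl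
      · obtain ⟨x, hx, rfl⟩ := Finset.mem_image.mp he
        obtain ⟨y, hy, rfl⟩ := Finset.mem_image.mp hf
        have hxy : x ≠ y := fun h => hne (by rw [h])
        have hadj := hcl (Or.inl (Sym2.mem_mk_right u x)) (Or.inr (Sym2.mem_mk_right u y)) hxy
        exact (hpe y hy) ((mem_pend.mp hx).2 y hadj)
  have hcardA : A.card = alphaPrime (Gdel G u) + (pend G u).card := by
    rw [hA, Finset.card_union_of_disjoint hdisj, hcard,
      Finset.card_image_of_injOn hinjP]
  exact hcardA ▸ le_csSup (alpha_bddAbove G) ⟨A, hindep, rfl⟩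

lemma theta_step [Fintype V] (G : SimpleGraph V) (u : V)
    (hu : ∀ x, G.Reachable u x → x ≠ u → G.Adj u x) :
    thetaE G ≤ thetaE (Gdel G u) + (pend G u).card := by
  classical
  obtain ⟨F0, hF0⟩ := cover_nonempty (Gdel G u)
  have hmem : thetaE (Gdel G u) ∈
      {n | ∃ F : Finset (Finset V), IsEdgeCliqueCover (Gdel G u) F ∧ F.card = n} :=
    Nat.sInf_mem ⟨F0.card, F0, hF0, rfl⟩
  obtain ⟨F', hF', hcard⟩ := hmem
  set F : Finset (Finset V) :=
    F'.image (fun C => if ↑C ⊆ G.neighborSet u then insert u C else C) ∪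
      (pend G u).image (fun x => {u, x}) with hF
  have hclique : ∀ D ∈ F, G.IsClique (D : Set V) := by
    intro D hD
    rcases Finset.mem_union.mp hD with h | h
    · obtain ⟨C, hC, rfl⟩ := Finset.mem_image.mp h
      have hCcl : G.IsClique (C : Set V) := (hF'.1 C hC).mono (Gdel_le G u)
      by_cases hcond : ↑C ⊆ G.neighborSet u
      · rw [if_pos hcond, Finset.coe_insert]
        rw [isClique_insert]
        exact ⟨hCcl, fun b hb _ => hcond hb⟩
      · rw [if_neg hcond]; exact hCcl
    · obtain ⟨x, hx, rfl⟩ := Finset.mem_image.mp h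
      rw [Finset.coe_insert, Finset.coe_singleton, isClique_pair]
      exact fun _ => (mem_pend.mp hx).1
  have key : ∀ x, G.Adj u x → ∃ C ∈ F, u ∈ C ∧ x ∈ C := by
    intro x hux
    by_cases hx : x ∈ pend G u
    · refine ⟨{u, x}, Finset.mem_union_right _ (Finset.mem_image_of_mem _ hx), ?_, ?_⟩
      · exact Finset.mem_insert_self u _
      · exact Finset.mem_insert_of_mem (Finset.mem_singleton_self x)
    · have : ∃ y, G.Adj x y ∧ y ≠ u := by
        by_contra hcon
        push_neg at hcon
        exact hx (mem_pend.mpr ⟨hux, fun y hy => hcon y hy⟩)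
      obtain ⟨y, hxy, hyu⟩ := this
      have hedge : s(x, y) ∈ (Gdel G u).edgeSet :=
        (mem_edgeSet _).mpr ⟨hxy, hux.ne', hyu⟩
      obtain ⟨C, hCF, hCmem⟩ := hF'.2 _ hedge
      have hxC : x ∈ C := hCmem x (Sym2.mem_mk_left x y)
      have hcond : ↑C ⊆ G.neighborSet u := by
        intro z hz
        rw [mem_neighborSet]
        by_cases hzx : z = x
        · exact hzx ▸ hux
        · have hadj := hF'.1 C hCF (Finset.mem_coe.mpr hxC) hz (Ne.symm hzx)
          have hGxz : G.Adj x z := hadj.1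
          exact hu z (hux.reachable.trans hGxz.reachable) hadj.2.2
      refine ⟨insert u C, ?_, Finset.mem_insert_self u C, Finset.mem_insert_of_mem hxC⟩
      refine Finset.mem_union_left _ (Finset.mem_image.mpr ⟨C, hCF, ?_⟩)
      rw [if_pos hcond]
  have hcover : IsEdgeCliqueCover G F := by
    refine ⟨hclique, ?_⟩
    intro e he
    induction e with
    | h a b =>
      rw [mem_edgeSet] at he
      by_cases ha : a = u
      · subst ha
        obtain ⟨C, hC, huC, hbC⟩ := key b he
        refine ⟨C, hC, ?_⟩
        intro x hx
        rcases Sym2.mem_iff.mp hx with rfl | rfl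
        exacts [huC, hbC]
      · by_cases hb : b = u
        · subst hb
          obtain ⟨C, hC, huC, haC⟩ := key a he.symm
          refine ⟨C, hC, ?_⟩
          intro x hx
          rcases Sym2.mem_iff.mp hx with rfl | rfl
          exacts [haC, huC]
        · have hedge : s(a, b) ∈ (Gdel G u).edgeSet := (mem_edgeSet _).mpr ⟨he, ha, hb⟩
          obtain ⟨C, hCF, hCmem⟩ := hF'.2 _ hedge
          refine ⟨if ↑C ⊆ G.neighborSet u then insert u C else C,
            Finset.mem_union_left _ (Finset.mem_image_of_mem _ hCF), ?_⟩
          intro x hx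
          by_cases hcond : ↑C ⊆ G.neighborSet u
          · rw [if_pos hcond]; exact Finset.mem_insert_of_mem (hCmem x hx)
          · rw [if_neg hcond]; exact hCmem x hx
  have hle : F.card ≤ thetaE (Gdel G u) + (pend G u).card := by
    calc F.card ≤ (F'.image _).card + ((pend G u).image _).card := Finset.card_union_le _ _
      _ ≤ F'.card + (pend G u).card :=
          Nat.add_le_add Finset.card_image_le Finset.card_image_le
      _ = _ := by rw [hcard]
  exact le_trans (Nat.sInf_le ⟨F, hcover, rfl⟩) hle
lemma eq_of_no_edges [Fintype V] (G : SimpleGraph V) (h : G.edgeSet = ∅) :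
    alphaPrime G = thetaE G := by
  have h0 : thetaE G ≤ 0 := by
    refine Nat.sInf_le ⟨∅, ⟨fun C hC => absurd hC (Finset.notMem_empty C), ?_⟩, rfl⟩
    intro e he
    rw [h] at he
    exact absurd he (Set.notMem_empty e)
  have h1 := alphaPrime_le_thetaE G
  omega

lemma general_eq [Fintype V] (G : SimpleGraph V)
    (hC4 : ¬ Nonempty (cycleGraph 4 ↪g G)) (hP4 : ¬ Nonempty (pathGraph 4 ↪g G)) :
    alphaPrime G = thetaE G := by
  classical
  suffices H : ∀ (n : ℕ) (G : SimpleGraph V), (¬ Nonempty (cycleGraph 4 ↪g G)) →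
      (¬ Nonempty (pathGraph 4 ↪g G)) → G.edgeSet.ncard ≤ n →
      alphaPrime G = thetaE G from H _ G hC4 hP4 le_rfl
  intro n
  induction n with
  | zero =>
    intro G _ _ hn
    have hfin : G.edgeSet.Finite := Set.toFinite _
    exact eq_of_no_edges G ((Set.ncard_eq_zero hfin).mp (Nat.le_zero.mp hn))
  | succ n ih =>
    intro G hC4 hP4 hn
    by_cases hE : G.edgeSet = ∅
    · exact eq_of_no_edges G hE
    · obtain ⟨e, he⟩ := Set.nonempty_iff_ne_empty.mpr hE
      have hvw : ∃ v w, G.Adj v w := by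
        induction e with
        | h v w => exact ⟨v, w, (mem_edgeSet _).mp he⟩
      obtain ⟨v, w, hvw⟩ := hvw
      haveI : DecidableRel G.Adj := Classical.decRel _
      obtain ⟨u, -, hmax⟩ :=
        Finset.exists_max_image (Finset.univ : Finset V) (fun z => G.degree z)
          ⟨v, Finset.mem_univ v⟩
      have hmax' : ∀ z, G.degree z ≤ G.degree u := fun z => hmax z (Finset.mem_univ z)
      have hu := maxdeg_universal hmax' hC4 hP4
      have hdegu : 0 < G.degree u :=
        lt_of_lt_of_le ((G.degree_pos_iff_exists_adj v).mpr ⟨w, hvw⟩) (hmax' v)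
      obtain ⟨x0, hx0⟩ := (G.degree_pos_iff_exists_adj u).mp hdegu
      have hC4' : ¬ Nonempty (cycleGraph 4 ↪g Gdel G u) :=
        fun ⟨f⟩ => hC4 (embed_transfer cycle4_deg f)
      have hP4' : ¬ Nonempty (pathGraph 4 ↪g Gdel G u) :=
        fun ⟨f⟩ => hP4 (embed_transfer path4_deg f)
      have hlt : (Gdel G u).edgeSet.ncard < G.edgeSet.ncard := by
        apply Set.ncard_lt_ncard _ (Set.toFinite _)
        rw [ssubset_iff_subset_ne]
        refine ⟨edgeSet_mono (Gdel_le G u), ?_⟩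
        intro heq
        have : s(u, x0) ∈ (Gdel G u).edgeSet := heq ▸ (mem_edgeSet _).mpr hx0
        exact ((mem_edgeSet _).mp this).2.1 rfl
      have ih' := ih (Gdel G u) hC4' hP4' (by omega)
      have h1 := alphaPrime_le_thetaE G
      have h2 := theta_step G u hu
      have h3 := alpha_step G u
      omega

end Aux

/-- For a connected trivially perfect graph (no induced `C₄`, no induced `P₄`),
`α'(G) = θ_e(G)`. -/
theorem alphaPrime_eq_thetaE_of_triviallyPerfect {V : Type*} [Fintype V]
    (G : SimpleGraph V) (hconn : G.Connected)
    (hC4 : ¬ Nonempty (cycleGraph 4 ↪g G))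
    (hP4 : ¬ Nonempty (pathGraph 4 ↪g G)) :
    alphaPrime G = thetaE G := by
  exact general_eq G hC4 hP4
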